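/- Let σ : ℝ → ℝ be a continuous nondecreasing function with σ(x) → 0 as x → −∞ and σ(x) → 1 as x → +∞. Then for every ε > 0 and every c > 0 there exist real numbers a₁, b₁, a₂, b₂ such that the function g(x) = σ(a₁x + b₁) + σ(a₂x + b₂) satisfies g(x) ≤ ε for all x ∈ [−c, c] and g(x) ≥ 1 − ε for all x ∉ [−c−1, c+1]. -/
import Mathlib


open MeasureTheory BoundedContinuousFunction Filter Topology

/-- For a continuous nondecreasing activation `σ` with `σ → 0` at `−∞` and
`σ → 1` at `+∞`: for every `ε > 0` and `c > 0` there are parameters such that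
`g(x) = σ(a₁x + b₁) + σ(a₂x + b₂)` satisfies `g ≤ ε` on `[−c, c]` and `g ≥ 1 − ε`
outside `[−c−1, c+1]`. -/
theorem statement13 (σ : ℝ → ℝ) (hσc : Continuous σ) (hσm : Monotone σ)
    (hσ0 : Tendsto σ atBot (𝓝 (0 : ℝ))) (hσ1 : Tendsto σ atTop (𝓝 (1 : ℝ))) :
    ∀ ε > (0 : ℝ), ∀ c > (0 : ℝ), ∃ a₁ b₁ a₂ b₂ : ℝ,
      (∀ x ∈ Set.Icc (-c) c, σ (a₁ * x + b₁) + σ (a₂ * x + b₂) ≤ ε) ∧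
      (∀ x ∉ Set.Icc (-(c + 1)) (c + 1), 1 - ε ≤ σ (a₁ * x + b₁) + σ (a₂ * x + b₂)) := by
  intro ε hε c hc
  -- σ is nonnegative everywhere
  have hσnn : ∀ x, 0 ≤ σ x := by
    intro x
    refine le_of_tendsto hσ0 ?_
    filter_upwards [eventually_le_atBot x] with y hy using hσm hy
  -- find M₁ with σ t ≤ ε/2 for t ≤ M₁
  obtain ⟨M₁, hM₁⟩ : ∃ M₁ : ℝ, ∀ t ≤ M₁, σ t ≤ ε / 2 := by
    have h := hσ0.eventually (eventually_le_nhds (show (0:ℝ) < ε / 2 by linarith))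
    rw [eventually_atBot] at h
    exact h
  -- find M₂ with σ t ≥ 1 - ε for t ≥ M₂
  obtain ⟨M₂, hM₂⟩ : ∃ M₂ : ℝ, ∀ t ≥ M₂, 1 - ε ≤ σ t := by
    have h := hσ1.eventually (eventually_ge_nhds (show 1 - ε < 1 by linarith))
    rw [eventually_atTop] at h
    exact h
  set M : ℝ := max 1 (max (-M₁) M₂) with hM
  have hMpos : 0 < M := lt_of_lt_of_le one_pos (le_max_left _ _)
  have hMleft : ∀ t ≤ -M, σ t ≤ ε / 2 := fun t ht =>
    hM₁ t (le_trans ht (by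
      have : -M₁ ≤ M := (le_max_left _ _).trans (le_max_right _ _)
      linarith))
  have hMright : ∀ t ≥ M, 1 - ε ≤ σ t := fun t ht =>
    hM₂ t (le_trans ((le_max_right _ _).trans (le_max_right _ _)) ht)
  refine ⟨2 * M, -(2 * M) * (c + 1/2), -(2 * M), -(2 * M) * (c + 1/2), ?_, ?_⟩
  · rintro x ⟨hx1, hx2⟩
    have e1 : 2 * M * x + -(2 * M) * (c + 1/2) ≤ -M := by nlinarith
    have e2 : -(2 * M) * x + -(2 * M) * (c + 1/2) ≤ -M := by nlinarith
    linarith [hMleft _ e1, hMleft _ e2]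
  · intro x hx
    rw [Set.mem_Icc, not_and_or, not_le, not_le] at hx
    rcases hx with hx | hx
    · have e2 : M ≤ -(2 * M) * x + -(2 * M) * (c + 1/2) := by nlinarith
      linarith [hMright _ e2, hσnn (2 * M * x + -(2 * M) * (c + 1/2))]
    · have e1 : M ≤ 2 * M * x + -(2 * M) * (c + 1/2) := by nlinarith
      linarith [hMright _ e1, hσnn (-(2 * M) * x + -(2 * M) * (c + 1/2))]
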